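/- arXiv:1806.03022 — 7 statements merged into one kernel-verified Lean document; each statement's English description precedes it below -/
import Mathlib

section
/- For every positive integer n and all complex numbers s and x, one has ∑_{k=0}^{n} C(s+n, k) · x^k = (1+x)^n + s · ∑_{k=0}^{n-1} (C(s+k, k)/(k+1)) · x^{k+1} · (1+x)^{n-k-1}. (This is the denominator-cleared form of the paper's identity ∑_{k=0}^{n} C(s+n,k) x^k = (1+x)^n [1 + s ∑_{k=0}^{n-1} (C(s+k,k)/(k+1)) (x/(x+1))^{k+1}].) -/
/-- Generalized binomial coefficient `C(s,k) = s(s-1)⋯(s-k+1)/k!` for complex `s`. -/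
noncomputable def genChoose (s : ℂ) (k : ℕ) : ℂ :=
  (∏ i ∈ Finset.range k, (s - i)) / (Nat.factorial k)

/-- The `n`-th harmonic number as a complex number. -/
noncomputable def Hc (n : ℕ) : ℂ := ∑ i ∈ Finset.range n, 1 / (i + 1)

/-- The `n`-th generalized harmonic number of order 2 as a complex number. -/
noncomputable def H2c (n : ℕ) : ℂ := ∑ i ∈ Finset.range n, 1 / ((i : ℂ) + 1) ^ 2

lemma genChoose_zero (s : ℂ) : genChoose s 0 = 1 := by simp [genChoose]

lemma genChoose_pascal (t : ℂ) (k : ℕ) :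
    genChoose (t + 1) (k + 1) = genChoose t (k + 1) + genChoose t k := by
  unfold genChoose
  rw [Finset.prod_range_succ' (f := fun i => t + 1 - (i : ℕ))]
  rw [Finset.prod_range_succ (f := fun i => t - (i : ℕ))]
  have h1 : ∀ i ∈ Finset.range k, (t + 1 - ((i + 1 : ℕ) : ℂ)) = t - (i : ℕ) := by
    intro i _; push_cast; ring
  rw [Finset.prod_congr rfl h1]
  have hk : ((Nat.factorial (k + 1) : ℂ)) ≠ 0 := by
    exact_mod_cast Nat.factorial_ne_zero _
  have hk' : ((Nat.factorial k : ℂ)) ≠ 0 := by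
    exact_mod_cast Nat.factorial_ne_zero _
  rw [Nat.factorial_succ]
  push_cast
  push_cast at hk
  have hn : ((k : ℂ) + 1) ≠ 0 := Nat.cast_add_one_ne_zero k
  field_simp
  ring

lemma genChoose_tail (s : ℂ) (n : ℕ) :
    genChoose (s + n) (n + 1) = s * genChoose (s + n) n / (n + 1) := by
  unfold genChoose
  rw [Finset.prod_range_succ, Nat.factorial_succ]
  have hk' : ((Nat.factorial n : ℂ)) ≠ 0 := by
    exact_mod_cast Nat.factorial_ne_zero _
  have hn : ((n : ℂ) + 1) ≠ 0 := Nat.cast_add_one_ne_zero n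
  push_cast
  field_simp
  ring

lemma step (n : ℕ) (s x : ℂ) :
    ∑ k ∈ Finset.range (n + 2), genChoose (s + (n + 1 : ℕ)) k * x ^ k =
      (1 + x) * ∑ k ∈ Finset.range (n + 1), genChoose (s + n) k * x ^ k
        + s * genChoose (s + n) n / (n + 1) * x ^ (n + 1) := by
  have hcast : (s + ((n + 1 : ℕ) : ℂ)) = (s + n) + 1 := by push_cast; ring
  rw [hcast]
  rw [Finset.sum_range_succ' (f := fun k => genChoose (s + n + 1) k * x ^ k)]
  have h1 : ∀ k ∈ Finset.range (n + 1),
      genChoose (s + n + 1) (k + 1) * x ^ (k + 1) =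
        genChoose (s + n) (k + 1) * x ^ (k + 1) + genChoose (s + n) k * x ^ k * x := by
    intro k _
    rw [genChoose_pascal]
    ring
  rw [Finset.sum_congr rfl h1, Finset.sum_add_distrib]
  have h2 : (∑ k ∈ Finset.range (n + 1), genChoose (s + n) (k + 1) * x ^ (k + 1))
      + genChoose (s + n + 1) 0 * x ^ 0
      = ∑ k ∈ Finset.range (n + 2), genChoose (s + n) k * x ^ k := by
    rw [Finset.sum_range_succ' (f := fun k => genChoose (s + n) k * x ^ k)]
    simp [genChoose_zero]
  have h3 : ∑ k ∈ Finset.range (n + 2), genChoose (s + n) k * x ^ k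
      = (∑ k ∈ Finset.range (n + 1), genChoose (s + n) k * x ^ k)
        + genChoose (s + n) (n + 1) * x ^ (n + 1) := by
    rw [Finset.sum_range_succ]
  rw [add_right_comm, h2, h3, genChoose_tail, ← Finset.sum_mul]
  ring

lemma main_lemma (n : ℕ) (s x : ℂ) :
    ∑ k ∈ Finset.range (n + 1), genChoose (s + n) k * x ^ k =
      (1 + x) ^ n + s * ∑ k ∈ Finset.range n,
        genChoose (s + k) k / (k + 1) * x ^ (k + 1) * (1 + x) ^ (n - k - 1) := by
  induction n with
  | zero => simp [genChoose]
  | succ n ih =>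
    rw [show n + 1 + 1 = n + 2 from rfl, step n s x, ih]
    rw [Finset.sum_range_succ
      (f := fun k => genChoose (s + k) k / ((k : ℂ) + 1) * x ^ (k + 1) * (1 + x) ^ (n + 1 - k - 1))]
    have h4 : ∀ k ∈ Finset.range n,
        genChoose (s + k) k / ((k : ℂ) + 1) * x ^ (k + 1) * (1 + x) ^ (n + 1 - k - 1)
        = genChoose (s + k) k / ((k : ℂ) + 1) * x ^ (k + 1) * (1 + x) ^ (n - k - 1) * (1 + x) := by
      intro k hk
      rw [Finset.mem_range] at hk
      have : n + 1 - k - 1 = (n - k - 1) + 1 := by omega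
      rw [this, pow_succ]
      ring
    rw [Finset.sum_congr rfl h4]
    simp only [Nat.add_sub_cancel_left, Nat.sub_self, pow_zero]
    rw [← Finset.sum_mul]
    ring

theorem stmt_0 (n : ℕ) (hn : 0 < n) (s x : ℂ) :
    ∑ k ∈ Finset.range (n + 1), genChoose (s + n) k * x ^ k =
      (1 + x) ^ n + s * ∑ k ∈ Finset.range n,
        genChoose (s + k) k / (k + 1) * x ^ (k + 1) * (1 + x) ^ (n - k - 1) := by
  exact main_lemma n s x
end

section
/- Let n be a positive integer and let s be a complex number such that s + j ≠ 0 for j = 1, …, n. Then ∑_{k=0}^{n} (-1)^k · C(s+n, k) · (∑_{j=0}^{k-1} 1/(s+n-j)) = ((-1)^n / n) · C(s+n-1, n-1) · (1 + s · ∑_{j=1}^{n-1} 1/(s+j)). -/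
open Finset

lemma prod_shift (t : ℂ) (k : ℕ) :
    t * ∏ i ∈ range k, (t - 1 - i) = (t - k) * ∏ i ∈ range k, (t - i) := by
  have h1 : ∏ i ∈ range (k+1), (t - i) = (∏ i ∈ range k, (t - ((i:ℕ)+1:ℕ))) * (t - (0:ℕ)) :=
    Finset.prod_range_succ' (fun i => (t - i)) k
  have h2 : ∏ i ∈ range (k+1), (t - i) = (∏ i ∈ range k, (t - i)) * (t - k) :=
    Finset.prod_range_succ _ k
  have h3 : (∏ i ∈ range k, (t - ((i:ℕ)+1:ℕ))) = ∏ i ∈ range k, (t - 1 - i) := by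
    apply Finset.prod_congr rfl; intro i _; push_cast; ring
  rw [h3] at h1
  push_cast at h1
  linear_combination h2 - h1

lemma ratio (t : ℂ) (k : ℕ) : t * genChoose (t-1) k = (t - k) * genChoose t k := by
  unfold genChoose
  rw [mul_div_assoc', mul_div_assoc', prod_shift]

lemma pascal (t : ℂ) (k : ℕ) :
    genChoose t (k+1) = genChoose (t-1) (k+1) + genChoose (t-1) k := by
  unfold genChoose
  have hfac : (((k+1).factorial : ℕ) : ℂ) = ((k:ℂ)+1) * (k.factorial : ℂ) := by
    push_cast [Nat.factorial_succ]; ring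
  have hk : ((k.factorial : ℂ)) ≠ 0 := by exact_mod_cast Nat.factorial_ne_zero k
  have hk1 : ((k:ℂ)+1) ≠ 0 := Nat.cast_add_one_ne_zero k
  have e1 : ∏ i ∈ range (k+1), (t - i) = t * ∏ i ∈ range k, (t - 1 - i) := by
    have h1 : ∏ i ∈ range (k+1), (t - i) = (∏ i ∈ range k, (t - ((i:ℕ)+1:ℕ))) * (t - (0:ℕ)) :=
      Finset.prod_range_succ' (fun i => (t - i)) k
    have h3 : (∏ i ∈ range k, (t - ((i:ℕ)+1:ℕ))) = ∏ i ∈ range k, (t - 1 - i) := by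
      apply Finset.prod_congr rfl; intro i _; push_cast; ring
    rw [h3] at h1; push_cast at h1; linear_combination h1
  have e2 : ∏ i ∈ range (k+1), (t - 1 - i) = (∏ i ∈ range k, (t - 1 - i)) * (t - 1 - k) :=
    Finset.prod_range_succ _ k
  rw [e1, e2, hfac]
  field_simp
  ring

lemma altsum (t : ℂ) (m : ℕ) :
    ∑ k ∈ range (m+1), (-1:ℂ)^k * genChoose t k = (-1:ℂ)^m * genChoose (t-1) m := by
  induction m with
  | zero => simp [genChoose]
  | succ m ih =>
      rw [Finset.sum_range_succ, ih, pascal]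
      ring

lemma swap_sum {M : Type*} [AddCommMonoid M] (f : ℕ → ℕ → M) (N : ℕ) :
    ∑ k ∈ range N, ∑ j ∈ range k, f j k
      = ∑ j ∈ range N, ∑ k ∈ Ico (j+1) N, f j k := by
  induction N with
  | zero => simp
  | succ N ih =>
      rw [Finset.sum_range_succ, ih, Finset.sum_range_succ]
      have h1 : ∀ j ∈ range N, ∑ k ∈ Ico (j+1) (N+1), f j k
          = (∑ k ∈ Ico (j+1) N, f j k) + f j N := by
        intro j hj
        rw [Finset.sum_Ico_succ_top (Nat.succ_le_of_lt (mem_range.mp hj))]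
      rw [Finset.sum_congr rfl h1, Finset.sum_add_distrib]
      simp

-- step down one in the top index
lemma step_down (t : ℂ) (m : ℕ) :
    genChoose t (m+1) = genChoose t m * (t - m) / ((m:ℂ)+1) := by
  have hfac : (((m+1).factorial : ℕ) : ℂ) = ((m:ℂ)+1) * (m.factorial : ℂ) := by
    push_cast [Nat.factorial_succ]; ring
  have hk : ((m.factorial : ℂ)) ≠ 0 := by exact_mod_cast Nat.factorial_ne_zero m
  have hk1 : ((m:ℂ)+1) ≠ 0 := Nat.cast_add_one_ne_zero m
  rw [eq_div_iff hk1]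
  unfold genChoose
  rw [Finset.prod_range_succ, hfac]
  field_simp

theorem stmt_2 (n : ℕ) (hn : 0 < n) (s : ℂ)
    (hs : ∀ j ∈ Finset.Icc 1 n, s + (j : ℂ) ≠ 0) :
    ∑ k ∈ Finset.range (n + 1), (-1 : ℂ) ^ k * genChoose (s + n) k *
        (∑ j ∈ Finset.range k, 1 / (s + n - j)) =
      (-1 : ℂ) ^ n / n * genChoose (s + n - 1) (n - 1) *
        (1 + s * ∑ j ∈ Finset.Icc 1 (n - 1), 1 / (s + j)) := by
  set t : ℂ := s + n with ht
  obtain ⟨m, rfl⟩ : ∃ m, n = m + 1 := ⟨n - 1, (Nat.succ_pred_eq_of_pos hn).symm⟩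
  have hnz : ∀ j : ℕ, j < m + 1 → t - j ≠ 0 := by
    intro j hj
    have h := hs (m + 1 - j) (by rw [Finset.mem_Icc]; omega)
    have hc : ((m + 1 - j : ℕ) : ℂ) = ((m:ℂ) + 1) - j := by
      have : ((m + 1 - j : ℕ) : ℂ) = ((m + 1 : ℕ) : ℂ) - (j : ℕ) := by
        rw [Nat.cast_sub (by omega)]
      rw [this]; push_cast; ring
    rw [hc] at h
    intro hh; apply h
    rw [ht] at hh; push_cast at hh; linear_combination hh
  have ht0 : t ≠ 0 := by
    have h := hs (m+1) (by rw [Finset.mem_Icc]; omega)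
    rw [ht]; push_cast; push_cast at h; exact h
  have hn0 : ((m:ℂ)+1) ≠ 0 := Nat.cast_add_one_ne_zero m
  -- Step 1: swap the double sum
  have e0 : ∀ k : ℕ, (-1:ℂ)^k * genChoose t k * (∑ j ∈ range k, 1/(t - j))
      = ∑ j ∈ range k, 1/(t-j) * ((-1:ℂ)^k * genChoose t k) := by
    intro k; rw [Finset.mul_sum]; exact Finset.sum_congr rfl (fun j _ => by ring)
  have step1 : ∑ k ∈ range ((m+1)+1), (-1:ℂ)^k * genChoose t k * (∑ j ∈ range k, 1/(t - j))
      = ∑ j ∈ range ((m+1)+1), ∑ k ∈ Ico (j+1) ((m+1)+1),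
          1/(t-j) * ((-1:ℂ)^k * genChoose t k) := by
    simp only [e0]
    exact swap_sum (fun j k => 1/(t-(j:ℂ)) * ((-1:ℂ)^k * genChoose t k)) ((m+1)+1)
  -- Step 2: evaluate the inner sums
  have inner : ∀ j : ℕ, j < (m+1)+1 → ∑ k ∈ Ico (j+1) ((m+1)+1), (-1:ℂ)^k * genChoose t k
      = (-1:ℂ)^(m+1) * genChoose (t-1) (m+1) - (-1:ℂ)^j * genChoose (t-1) j := by
    intro j hj
    rw [Finset.sum_Ico_eq_sub _ (by omega : j + 1 ≤ (m+1)+1), altsum, altsum]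
  have step2 : ∑ j ∈ range ((m+1)+1), ∑ k ∈ Ico (j+1) ((m+1)+1),
        1/(t-j) * ((-1:ℂ)^k * genChoose t k)
      = ∑ j ∈ range (m+1), 1/(t-j) *
          ((-1:ℂ)^(m+1) * genChoose (t-1) (m+1) - (-1:ℂ)^j * genChoose (t-1) j) := by
    rw [Finset.sum_range_succ]
    have hlast : ∑ k ∈ Ico ((m+1)+1) ((m+1)+1), 1/(t-((m+1:ℕ):ℂ)) * ((-1:ℂ)^k * genChoose t k)
        = 0 := by simp
    rw [hlast, add_zero]
    apply Finset.sum_congr rfl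
    intro j hj
    rw [← Finset.mul_sum, inner j (by exact lt_trans (mem_range.mp hj) (by omega))]
  -- Step 3: split, evaluate second sum via ratio
  have hratio : ∀ j : ℕ, j < m + 1 →
      1/(t-j) * ((-1:ℂ)^j * genChoose (t-1) j) = (1/t) * ((-1:ℂ)^j * genChoose t j) := by
    intro j hj
    have h := ratio t j
    have h2 := hnz j hj
    rw [div_mul_eq_mul_div, div_mul_eq_mul_div, one_mul, one_mul, div_eq_div_iff h2 ht0]
    linear_combination ((-1:ℂ)^j) * h
  have step3 : ∑ j ∈ range (m+1), 1/(t-j) *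
        ((-1:ℂ)^(m+1) * genChoose (t-1) (m+1) - (-1:ℂ)^j * genChoose (t-1) j)
      = ((-1:ℂ)^(m+1) * genChoose (t-1) (m+1)) * (∑ j ∈ range (m+1), 1/(t-j))
        - (1/t) * ((-1:ℂ)^m * genChoose (t-1) m) := by
    have e : ∑ j ∈ range (m+1), 1/(t-(j:ℂ)) *
        ((-1:ℂ)^(m+1) * genChoose (t-1) (m+1) - (-1:ℂ)^j * genChoose (t-1) j)
        = ∑ j ∈ range (m+1), (((-1:ℂ)^(m+1) * genChoose (t-1) (m+1)) * (1/(t-j))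
          - (1/t) * ((-1:ℂ)^j * genChoose t j)) := by
      apply Finset.sum_congr rfl
      intro j hj
      rw [mul_sub, ← hratio j (mem_range.mp hj)]
      ring
    rw [e, Finset.sum_sub_distrib, ← Finset.mul_sum, ← Finset.mul_sum, altsum]
  rw [step1, step2, step3]
  -- split off the j = 0 term of the harmonic-type sum
  have hS : ∑ j ∈ range (m+1), 1/(t-(j:ℂ)) = 1/t + ∑ j ∈ range m, 1/(t-((j:ℂ)+1)) := by
    rw [Finset.sum_range_succ' (fun j => 1/(t-(j:ℂ))) m]
    simp only [Nat.cast_zero, sub_zero, Nat.cast_add, Nat.cast_one]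
    ring
  -- identify the Icc sum on the RHS with the range sum
  have hIcc : ∑ j ∈ Finset.Icc 1 m, 1/(s+(j:ℂ)) = ∑ j ∈ range m, 1/(t-((j:ℂ)+1)) := by
    apply Finset.sum_nbij' (fun i => m - i) (fun j => m - j)
    · intro a ha; rw [Finset.mem_Icc] at ha; rw [mem_range]; omega
    · intro a ha; rw [mem_range] at ha; rw [Finset.mem_Icc]; omega
    · intro a ha; rw [Finset.mem_Icc] at ha; omega
    · intro a ha; rw [mem_range] at ha; omega
    · intro a ha; rw [Finset.mem_Icc] at ha
      have hd : t - (((m - a : ℕ):ℂ)+1) = s + a := by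
        rw [ht, Nat.cast_sub ha.2]; push_cast; ring
      rw [hd]
  -- top-index reduction
  have hC : genChoose (t-1) (m+1) = genChoose (t-1) m * s / ((m:ℂ)+1) := by
    rw [step_down]
    congr 2
    rw [ht]; push_cast; ring
  have hm1 : (m + 1) - 1 = m := by omega
  rw [hm1, hIcc, hS, hC]
  have ht0' : s + ((m:ℂ)+1) ≠ 0 := by rw [ht] at ht0; push_cast at ht0; exact ht0
  rw [ht]
  push_cast
  field_simp
  ring
end

section
/- Let n be a positive integer and let s be a complex number such that s + j ≠ 0 for j = 1, …, n. Then for every complex number x: ∑_{k=0}^{n} C(s+n, k) · [ (∑_{j=0}^{k-1} 1/(s+n-j))^2 − ∑_{j=0}^{k-1} 1/(s+n-j)^2 ] · x^k = ∑_{k=0}^{n-1} (C(s+k, k)/(k+1)) · [ 2 · ∑_{j=1}^{k} 1/(s+j) + s · ( (∑_{j=1}^{k} 1/(s+j))^2 − ∑_{j=1}^{k} 1/(s+j)^2 ) ] · x^{k+1} · (1+x)^{n-k-1}. -/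
open Finset

/-- `Tc t k` is the closed form of the second derivative (in `t`) of `genChoose t k`. -/
noncomputable def Tc (t : ℂ) (k : ℕ) : ℂ :=
  genChoose t k *
    ((∑ j ∈ range k, 1 / (t - j)) ^ 2 - ∑ j ∈ range k, 1 / (t - j) ^ 2)

/-- The coefficient on the right-hand side. -/
noncomputable def Rk (s : ℂ) (k : ℕ) : ℂ :=
  genChoose (s + k) k / (k + 1) *
    (2 * ∑ j ∈ Icc 1 k, 1 / (s + j) +
      s * ((∑ j ∈ Icc 1 k, 1 / (s + j)) ^ 2 -
        ∑ j ∈ Icc 1 k, 1 / (s + j) ^ 2))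

lemma Tc_zero (t : ℂ) : Tc t 0 = 0 := by simp [Tc, genChoose]

lemma pascalT (t : ℂ) (m : ℕ) (ht : t ≠ 0) (hb : t - 1 - (m : ℂ) ≠ 0) :
    Tc t (m + 1) = Tc (t - 1) (m + 1) + Tc (t - 1) m := by
  have hp : (∏ i ∈ range m, (t - (↑(i+1) : ℂ))) = ∏ i ∈ range m, (t - 1 - i) := by
    refine Finset.prod_congr rfl fun i _ => by push_cast; ring
  have hU : (∑ j ∈ range m, 1 / (t - (↑(j+1) : ℂ))) = ∑ j ∈ range m, 1 / (t - 1 - j) := by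
    refine Finset.sum_congr rfl fun j _ => by norm_num; ring_nf
  have hV : (∑ j ∈ range m, 1 / (t - (↑(j+1) : ℂ)) ^ 2) = ∑ j ∈ range m, 1 / (t - 1 - j) ^ 2 := by
    refine Finset.sum_congr rfl fun j _ => by norm_num; ring_nf
  simp only [Tc, genChoose, Finset.prod_range_succ' (fun i => t - (i : ℂ)),
    Finset.sum_range_succ' (fun j => 1 / (t - (j : ℂ))),
    Finset.sum_range_succ' (fun j => 1 / (t - (j : ℂ)) ^ 2),
    Finset.prod_range_succ, Finset.sum_range_succ, Nat.cast_zero, sub_zero]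
  rw [hp, hU, hV]
  set P := ∏ i ∈ range m, (t - 1 - (i : ℂ))
  set U := ∑ j ∈ range m, 1 / (t - 1 - (j : ℂ))
  set V := ∑ j ∈ range m, 1 / (t - 1 - (j : ℂ)) ^ 2
  have hfac : ((m + 1).factorial : ℂ) = ((m : ℂ) + 1) * (m.factorial : ℂ) := by
    rw [Nat.factorial_succ]; push_cast; ring
  have hf0 : ((m.factorial : ℕ) : ℂ) ≠ 0 := by exact_mod_cast m.factorial_ne_zero
  have hm1 : ((m : ℂ) + 1) ≠ 0 := Nat.cast_add_one_ne_zero m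
  rw [hfac]
  field_simp
  ring

lemma edgeT (u : ℂ) (n : ℕ) (hu : u + 1 ≠ 0) :
    Tc (u + 1) (n + 1) - Tc u n =
      (∏ i ∈ range n, (u - i)) / (Nat.factorial n) / ((n : ℂ) + 1) *
        (2 * ∑ j ∈ range n, 1 / (u - j) +
          (u - n) * ((∑ j ∈ range n, 1 / (u - j)) ^ 2 -
            ∑ j ∈ range n, 1 / (u - j) ^ 2)) := by
  have hp : (∏ i ∈ range n, (u + 1 - (↑(i+1) : ℂ))) = ∏ i ∈ range n, (u - i) := by
    refine Finset.prod_congr rfl fun i _ => by push_cast; ring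
  have hU : (∑ j ∈ range n, 1 / (u + 1 - (↑(j+1) : ℂ))) = ∑ j ∈ range n, 1 / (u - j) := by
    refine Finset.sum_congr rfl fun j _ => by norm_num
  have hV : (∑ j ∈ range n, 1 / (u + 1 - (↑(j+1) : ℂ)) ^ 2) = ∑ j ∈ range n, 1 / (u - j) ^ 2 := by
    refine Finset.sum_congr rfl fun j _ => by norm_num
  simp only [Tc, genChoose, Finset.prod_range_succ' (fun i => u + 1 - (i : ℂ)),
    Finset.sum_range_succ' (fun j => 1 / (u + 1 - (j : ℂ))),
    Finset.sum_range_succ' (fun j => 1 / (u + 1 - (j : ℂ)) ^ 2), Nat.cast_zero, sub_zero]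
  rw [hp, hU, hV]
  set P := ∏ i ∈ range n, (u - (i : ℂ))
  set U := ∑ j ∈ range n, 1 / (u - (j : ℂ))
  set V := ∑ j ∈ range n, 1 / (u - (j : ℂ)) ^ 2
  have hfac : ((n + 1).factorial : ℂ) = ((n : ℂ) + 1) * (n.factorial : ℂ) := by
    rw [Nat.factorial_succ]; push_cast; ring
  have hf0 : ((n.factorial : ℕ) : ℂ) ≠ 0 := by exact_mod_cast n.factorial_ne_zero
  have hm1 : ((n : ℂ) + 1) ≠ 0 := Nat.cast_add_one_ne_zero n
  rw [hfac]
  field_simp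
  ring

lemma sum_Icc_reflect (f : ℂ → ℂ) (s : ℂ) (n : ℕ) :
    ∑ j ∈ Icc 1 n, f (s + j) = ∑ j ∈ range n, f (s + n - j) := by
  have h1 : Icc 1 n = Ico 1 (n + 1) := by rw [Finset.Ico_add_one_right_eq_Icc]
  rw [h1, Finset.sum_Ico_eq_sum_range]
  simp only [Nat.add_sub_cancel]
  rw [← Finset.sum_range_reflect (fun j => f (s + ↑n - ↑j)) n]
  refine Finset.sum_congr rfl fun i hi => ?_
  have hi' := Finset.mem_range.mp hi
  congr 1
  have h2 : ((n - 1 - i : ℕ) : ℂ) = (n : ℂ) - 1 - i := by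
    have h3 : n - 1 - i = n - (1 + i) := by omega
    rw [h3, Nat.cast_sub (by omega)]
    push_cast; ring
  rw [h2]; push_cast; ring

lemma key (n : ℕ) (hn : 1 ≤ n) (s : ℂ)
    (hs : ∀ j ∈ Finset.Icc 1 n, s + (j : ℂ) ≠ 0) (x : ℂ) :
    ∑ k ∈ range (n + 1), Tc (s + n) k * x ^ k
      = ∑ k ∈ range n, Rk s k * x ^ (k + 1) * (1 + x) ^ (n - k - 1) := by
  induction n, hn using Nat.le_induction with
  | base =>
    norm_num [Tc, genChoose, Rk, Finset.sum_range_succ, div_pow]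
  | succ n hn ih =>
    have hsn : ∀ j ∈ Finset.Icc 1 n, s + (j : ℂ) ≠ 0 := fun j hj => hs j (by
      simp only [Finset.mem_Icc] at hj ⊢; omega)
    have ht : s + (n : ℂ) + 1 ≠ 0 := by
      have h := hs (n + 1) (by simp [Finset.mem_Icc])
      push_cast at h
      intro hc; exact h (by linear_combination hc)
    have S := ih hsn
    -- normalize casts in the goal
    push_cast
    have harg : s + ((n : ℂ) + 1) = s + (n : ℂ) + 1 := by ring
    rw [harg]
    -- LHS manipulation
    have e1 : ∑ k ∈ range (n + 1), Tc (s + n) k * x ^ k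
        = (∑ k ∈ range n, Tc (s + n) (k + 1) * x ^ (k + 1)) + Tc (s + n) 0 * x ^ 0 :=
      Finset.sum_range_succ' _ n
    have e2 : ∑ k ∈ range (n + 1), Tc (s + n) k * x ^ k
        = (∑ k ∈ range n, Tc (s + n) k * x ^ k) + Tc (s + n) n * x ^ n :=
      Finset.sum_range_succ _ n
    have hL : ∑ k ∈ range (n + 1 + 1), Tc (s + (n : ℂ) + 1) k * x ^ k
        = (∑ k ∈ range (n + 1), Tc (s + n) k * x ^ k)
          + x * ((∑ k ∈ range (n + 1), Tc (s + n) k * x ^ k) - Tc (s + n) n * x ^ n)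
          + Tc (s + (n : ℂ) + 1) (n + 1) * x ^ (n + 1) := by
      rw [Finset.sum_range_succ]
      congr 1
      rw [Finset.sum_range_succ' (fun k => Tc (s + (n : ℂ) + 1) k * x ^ k) n]
      have hpas : ∀ k ∈ range n, Tc (s + (n : ℂ) + 1) (k + 1) * x ^ (k + 1)
          = (Tc (s + n) (k + 1) + Tc (s + n) k) * x ^ (k + 1) := by
        intro k hk
        have hk' := Finset.mem_range.mp hk
        have hb : s + (n : ℂ) + 1 - 1 - (k : ℂ) ≠ 0 := by
          have h := hsn (n - k) (by simp only [Finset.mem_Icc]; omega)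
          rw [Nat.cast_sub hk'.le] at h
          intro hc; exact h (by linear_combination hc)
        have h1 : s + (n : ℂ) + 1 - 1 = s + n := by ring
        rw [pascalT (s + (n : ℂ) + 1) k ht hb, h1]
      rw [Finset.sum_congr rfl hpas]
      have d1 : ∑ k ∈ range n, (Tc (s + n) (k + 1) + Tc (s + n) k) * x ^ (k + 1)
          = (∑ k ∈ range n, Tc (s + n) (k + 1) * x ^ (k + 1))
            + ∑ k ∈ range n, Tc (s + n) k * x ^ (k + 1) := by
        rw [← Finset.sum_add_distrib]
        exact Finset.sum_congr rfl fun k _ => by ring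
      have d2 : ∑ k ∈ range n, Tc (s + n) k * x ^ (k + 1)
          = x * ∑ k ∈ range n, Tc (s + n) k * x ^ k := by
        rw [Finset.mul_sum]
        exact Finset.sum_congr rfl fun k _ => by ring
      rw [d1, d2]
      rw [Tc_zero]
      linear_combination -e1 - x * e2 - Tc_zero (s + (n : ℂ))
    -- RHS manipulation
    have hR : ∑ k ∈ range (n + 1), Rk s k * x ^ (k + 1) * (1 + x) ^ (n + 1 - k - 1)
        = (1 + x) * (∑ k ∈ range n, Rk s k * x ^ (k + 1) * (1 + x) ^ (n - k - 1))
          + Rk s n * x ^ (n + 1) := by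
      rw [Finset.sum_range_succ, Finset.mul_sum]
      congr 1
      · refine Finset.sum_congr rfl fun k hk => ?_
        have hk' := Finset.mem_range.mp hk
        have h3 : n + 1 - k - 1 = (n - k - 1) + 1 := by omega
        rw [h3, pow_succ]
        ring
      · have h4 : n + 1 - n - 1 = 0 := by omega
        rw [h4, pow_zero, mul_one]
    -- the edge identity
    have hedge : Tc (s + (n : ℂ) + 1) (n + 1) - Tc (s + n) n = Rk s n := by
      have c1 : ∑ j ∈ Icc 1 n, 1 / (s + (j : ℂ)) = ∑ j ∈ range n, 1 / (s + n - j) :=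
        sum_Icc_reflect (fun z => 1 / z) s n
      have c2 : ∑ j ∈ Icc 1 n, 1 / (s + (j : ℂ)) ^ 2 = ∑ j ∈ range n, 1 / (s + n - j) ^ 2 :=
        sum_Icc_reflect (fun z => 1 / z ^ 2) s n
      have h5 : s + (n : ℂ) - (n : ℂ) = s := by ring
      rw [edgeT (s + n) n ht, Rk, genChoose, c1, c2, h5]
    rw [hL, hR, S]
    linear_combination x ^ (n + 1) * hedge

theorem stmt_3 (n : ℕ) (hn : 0 < n) (s : ℂ)
    (hs : ∀ j ∈ Finset.Icc 1 n, s + (j : ℂ) ≠ 0) (x : ℂ) :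
    ∑ k ∈ Finset.range (n + 1), genChoose (s + n) k *
        ((∑ j ∈ Finset.range k, 1 / (s + n - j)) ^ 2 -
          ∑ j ∈ Finset.range k, 1 / (s + n - j) ^ 2) * x ^ k =
      ∑ k ∈ Finset.range n, genChoose (s + k) k / (k + 1) *
        (2 * ∑ j ∈ Finset.Icc 1 k, 1 / (s + j) +
          s * ((∑ j ∈ Finset.Icc 1 k, 1 / (s + j)) ^ 2 -
            ∑ j ∈ Finset.Icc 1 k, 1 / (s + j) ^ 2)) *
        x ^ (k + 1) * (1 + x) ^ (n - k - 1) := by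
  have h := key n hn s hs x
  simp only [Tc, Rk] at h
  exact h
end

section
/- Let n be a positive integer and let s be a complex number such that s + j ≠ 0 for j = 1, …, n. Then ∑_{k=0}^{n} (-1)^k · C(s+n, k) · [ (∑_{j=0}^{k-1} 1/(s+n-j))^2 − ∑_{j=0}^{k-1} 1/(s+n-j)^2 ] = ((-1)^n / n) · C(s+n-1, n-1) · [ 2 · ∑_{j=1}^{n-1} 1/(s+j) + s · ( (∑_{j=1}^{n-1} 1/(s+j))^2 − ∑_{j=1}^{n-1} 1/(s+j)^2 ) ]. -/
open Polynomial Finset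

lemma coeff012 (S : Finset ℕ) (c : ℕ → ℂ) (hc : ∀ i ∈ S, c i ≠ 0) :
    ((∏ i ∈ S, (X + C (c i))).coeff 0 = ∏ i ∈ S, c i) ∧
    ((∏ i ∈ S, (X + C (c i))).coeff 1 = (∏ i ∈ S, c i) * ∑ i ∈ S, (c i)⁻¹) ∧
    (2 * (∏ i ∈ S, (X + C (c i))).coeff 2 =
      (∏ i ∈ S, c i) * ((∑ i ∈ S, (c i)⁻¹) ^ 2 - ∑ i ∈ S, (c i)⁻¹ ^ 2)) := by
  classical
  induction S using Finset.induction_on with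
  | empty => simp [coeff_one]
  | @insert a S ha ih =>
    have hca : c a ≠ 0 := hc a (mem_insert_self a S)
    obtain ⟨h0, h1, h2⟩ := ih (fun i hi => hc i (mem_insert_of_mem hi))
    rw [prod_insert ha, prod_insert ha, sum_insert ha, sum_insert ha]
    simp only [add_mul, coeff_add, coeff_X_mul, coeff_C_mul, mul_coeff_zero, coeff_X_zero,
      coeff_C_zero, zero_mul, zero_add, one_mul]
    refine ⟨by rw [h0], ?_, ?_⟩
    · rw [h0, h1]
      linear_combination -(∏ i ∈ S, c i) * (mul_inv_cancel₀ hca)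
    · rw [h1]
      linear_combination c a * h2 - 2 * (∏ i ∈ S, c i) * (∑ i ∈ S, (c i)⁻¹) * (mul_inv_cancel₀ hca)

lemma keyA (n : ℕ) (a : ℂ) :
    ∑ k ∈ range (n + 1), C ((-1 : ℂ) ^ k * ((Nat.factorial k : ℕ) : ℂ)⁻¹) * ∏ j ∈ range k, (X + C (a - j)) =
      C ((-1 : ℂ) ^ n * ((Nat.factorial n : ℕ) : ℂ)⁻¹) * ∏ j ∈ range n, (X + C (a - 1 - j)) := by
  induction n with
  | zero => simp
  | succ n ih =>
    rw [sum_range_succ, ih]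
    have hP : ∏ j ∈ range (n + 1), (X + C (a - j)) =
        (X + C a) * ∏ j ∈ range n, (X + C (a - 1 - j)) := by
      rw [prod_range_succ']
      have h0 : (X + C (a - ((0:ℕ):ℂ))) = X + C a := by norm_num
      rw [h0, mul_comm]
      congr 1
      refine prod_congr rfl fun j _ => ?_
      push_cast
      ring_nf
    rw [hP, prod_range_succ]
    have hf : ((Nat.factorial n : ℕ) : ℂ) ≠ 0 := Nat.cast_ne_zero.mpr n.factorial_ne_zero
    have h1 : ((n : ℂ) + 1) ≠ 0 := by
      have := Nat.cast_add_one_ne_zero (R := ℂ) n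
      simpa using this
    have hfac : ((Nat.factorial n : ℕ) : ℂ)⁻¹ = ((Nat.factorial (n+1) : ℕ) : ℂ)⁻¹ * ((n : ℂ) + 1) := by
      rw [Nat.factorial_succ]
      push_cast
      field_simp
    rw [hfac]
    simp only [map_mul, map_add, map_one, map_natCast, map_pow, map_neg, map_sub, pow_succ]
    ring

lemma reindex (s : ℂ) (m : ℕ) (f : ℂ → ℂ) :
    ∑ j ∈ range m, f (s + (m : ℂ) - (j : ℂ)) = ∑ j ∈ Icc 1 m, f (s + (j : ℂ)) := by
  refine Finset.sum_nbij' (fun j => m - j) (fun j => m - j) ?_ ?_ ?_ ?_ ?_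
  · intro j hj; simp only [mem_range] at hj; simp only [mem_Icc]; omega
  · intro j hj; simp only [mem_Icc] at hj; simp only [mem_range]; omega
  · intro j hj; simp only [mem_range] at hj; show m - (m - j) = j; omega
  · intro j hj; simp only [mem_Icc] at hj; show m - (m - j) = j; omega
  · intro j hj
    simp only [mem_range] at hj
    congr 1
    have : ((m - j : ℕ) : ℂ) = (m : ℂ) - j := by
      push_cast [Nat.cast_sub hj.le]
      ring
    rw [this]
    ring

theorem stmt_4 (n : ℕ) (hn : 0 < n) (s : ℂ)
    (hs : ∀ j ∈ Finset.Icc 1 n, s + (j : ℂ) ≠ 0) :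
    ∑ k ∈ Finset.range (n + 1), (-1 : ℂ) ^ k * genChoose (s + n) k *
        ((∑ j ∈ Finset.range k, 1 / (s + n - j)) ^ 2 -
          ∑ j ∈ Finset.range k, 1 / (s + n - j) ^ 2) =
      (-1 : ℂ) ^ n / n * genChoose (s + n - 1) (n - 1) *
        (2 * ∑ j ∈ Finset.Icc 1 (n - 1), 1 / (s + j) +
          s * ((∑ j ∈ Finset.Icc 1 (n - 1), 1 / (s + j)) ^ 2 -
            ∑ j ∈ Finset.Icc 1 (n - 1), 1 / (s + j) ^ 2)) := by
  obtain ⟨m, rfl⟩ : ∃ m, n = m + 1 := ⟨n - 1, (Nat.succ_pred_eq_of_pos hn).symm⟩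
  simp only [Nat.add_sub_cancel]
  set a : ℂ := s + ((m + 1 : ℕ) : ℂ) with ha
  -- nonvanishing
  have hnz : ∀ j : ℕ, j < m + 1 → a - (j : ℂ) ≠ 0 := by
    intro j hj
    have h := hs (m + 1 - j) (by simp only [mem_Icc]; omega)
    have hcast : a - (j : ℂ) = s + ((m + 1 - j : ℕ) : ℂ) := by
      rw [ha, Nat.cast_sub hj.le]
      push_cast
      ring
    rw [hcast]
    exact h
  -- the coefficient-2 identity
  have key := congrArg (fun p : Polynomial ℂ => p.coeff 2) (keyA (m + 1) a)
  simp only [finset_sum_coeff, coeff_C_mul] at key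
  -- LHS: rewrite each term
  have hL : ∀ k ∈ range (m + 2), (-1 : ℂ) ^ k * genChoose a k *
      ((∑ j ∈ range k, 1 / (a - j)) ^ 2 - ∑ j ∈ range k, 1 / (a - j) ^ 2) =
      2 * ((-1 : ℂ) ^ k * ((Nat.factorial k : ℕ) : ℂ)⁻¹ *
        (∏ j ∈ range k, (X + C (a - j))).coeff 2) := by
    intro k hk
    have hk' : k ≤ m + 1 := by simp only [mem_range] at hk; omega
    have h2 := (coeff012 (range k) (fun j => a - j)
      (fun j hj => hnz j (lt_of_lt_of_le (mem_range.mp hj) hk'))).2.2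
    simp only [one_div, ← inv_pow]
    rw [genChoose, div_eq_mul_inv]
    linear_combination (-((-1 : ℂ) ^ k * ((Nat.factorial k : ℕ) : ℂ)⁻¹)) * h2
  rw [Finset.sum_congr rfl hL, ← Finset.mul_sum, key]
  -- RHS : split off the last factor
  have hsm : a - 1 - (m : ℂ) = s := by rw [ha]; push_cast; ring
  have hsplit : ∏ j ∈ range (m + 1), (X + C (a - 1 - j)) =
      (∏ j ∈ range m, (X + C (a - 1 - j))) * (X + C s) := by
    rw [prod_range_succ, hsm]
  have hc' : ∀ j ∈ range m, a - 1 - (j : ℂ) ≠ 0 := by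
    intro j hj
    simp only [mem_range] at hj
    have h := hs (m - j) (by simp only [mem_Icc]; omega)
    have hcast : a - 1 - (j : ℂ) = s + ((m - j : ℕ) : ℂ) := by
      rw [ha, Nat.cast_sub hj.le]
      push_cast
      ring
    rw [hcast]
    exact h
  obtain ⟨-, p1, p2⟩ := coeff012 (range m) (fun j => a - 1 - j) hc'
  have hco : (∏ j ∈ range (m + 1), (X + C (a - 1 - j))).coeff 2 =
      (∏ j ∈ range m, (X + C (a - 1 - j))).coeff 1 +
        (∏ j ∈ range m, (X + C (a - 1 - j))).coeff 2 * s := by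
    rw [hsplit, mul_add, coeff_add, coeff_mul_X, coeff_mul_C]
  -- reindex the harmonic sums
  have hA : ∑ j ∈ range m, (a - 1 - (j : ℂ))⁻¹ = ∑ j ∈ Icc 1 m, 1 / (s + j) := by
    rw [← reindex s m (fun z => 1 / z)]
    refine sum_congr rfl fun j hj => ?_
    rw [one_div, ha]
    push_cast
    ring_nf
  have hB : ∑ j ∈ range m, ((a - 1 - (j : ℂ))⁻¹) ^ 2 = ∑ j ∈ Icc 1 m, 1 / (s + j) ^ 2 := by
    rw [← reindex s m (fun z => 1 / z ^ 2)]
    refine sum_congr rfl fun j hj => ?_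
    rw [inv_pow, one_div, ha]
    push_cast
    ring_nf
  simp only [hA, hB] at p1 p2
  rw [hco, p1]
  generalize hT : (∏ j ∈ range m, (X + C (a - 1 - (j:ℂ)))).coeff 2 = T at p2 ⊢
  -- final algebra
  rw [genChoose]
  have hfm : ((Nat.factorial m : ℕ) : ℂ) ≠ 0 := Nat.cast_ne_zero.mpr m.factorial_ne_zero
  have hm1 : ((m : ℂ) + 1) ≠ 0 := by
    have := Nat.cast_add_one_ne_zero (R := ℂ) m
    simpa using this
  have hfe : ((Nat.factorial (m + 1) : ℕ) : ℂ)⁻¹ = ((Nat.factorial m : ℕ) : ℂ)⁻¹ * ((m : ℂ) + 1)⁻¹ := by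
    rw [Nat.factorial_succ]
    push_cast
    rw [mul_inv]
    ring
  rw [hfe]
  simp only [Nat.cast_add, Nat.cast_one]
  linear_combination ((-1 : ℂ) ^ (m + 1) * ((Nat.factorial m : ℕ) : ℂ)⁻¹ * ((m:ℂ)+1)⁻¹ * s) * p2
end

section
/- For every positive integer n and every complex number s: ∑_{k=1}^{n} C(s+n, k) · (-1)^{k-1}/k = H_n + s · ∑_{k=0}^{n-1} (-1)^k · C(s+k, k) / ((k+1)^2 · binom(n, k+1)), where binom(n, k+1) is the ordinary binomial coefficient. -/
lemma genChoose_succ (c : ℂ) (k : ℕ) :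
    genChoose (c + 1) (k + 1) = genChoose c k * (c + 1) / (k + 1) := by
  unfold genChoose
  rw [Finset.prod_range_succ']
  have h : ∀ i ∈ Finset.range k, (c + 1 - ((i:ℕ)+1 : ℕ)) = c - i := by
    intro i _; push_cast; ring
  rw [Finset.prod_congr rfl h]
  rw [Nat.factorial_succ]
  push_cast
  have hk : ((k:ℂ)+1) ≠ 0 := Nat.cast_add_one_ne_zero k
  have hf : ((Nat.factorial k : ℂ)) ≠ 0 := by
    exact_mod_cast Nat.cast_ne_zero.mpr (Nat.factorial_ne_zero k)
  field_simp
  ring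

lemma genChoose_shift (c : ℂ) (k : ℕ) :
    (c + 1 - k) * genChoose (c + 1) k = (c + 1) * genChoose c k := by
  unfold genChoose
  have h := Finset.prod_range_succ (fun i : ℕ => c + 1 - i) k
  have h' := Finset.prod_range_succ' (fun i : ℕ => c + 1 - i) k
  have h2 : ∀ i ∈ Finset.range k, (c + 1 - ((i:ℕ)+1 : ℕ)) = c - i := by
    intro i _; push_cast; ring
  rw [Finset.prod_congr rfl h2] at h'
  have key : (∏ i ∈ Finset.range k, (c + 1 - i)) * (c + 1 - k) =
      (∏ i ∈ Finset.range k, (c - i)) * (c + 1) := by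
    rw [← h, h']
    push_cast
    ring
  have key' : (c + 1 - k) * ∏ i ∈ Finset.range k, (c + 1 - i) =
      (c + 1) * ∏ i ∈ Finset.range k, (c - i) := by linear_combination key
  rw [mul_div_assoc', mul_div_assoc', key']

lemma choose_ne (n k : ℕ) (h : k ≤ n) : ((Nat.choose n k : ℂ)) ≠ 0 := by
  exact_mod_cast Nat.cast_ne_zero.mpr (Nat.choose_pos h).ne'

lemma lemC (n : ℕ) (s : ℂ) :
    ∑ k ∈ Finset.range n, (s + n + 1) * ((-1:ℂ)^k * genChoose (s + k) k) /
        (((k:ℂ) + 1) * (Nat.choose n (k+1) : ℂ)) =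
      1 - (-1:ℂ)^n * genChoose (s + n) n := by
  have key : ∑ k ∈ Finset.range n, (s + n + 1) * ((-1:ℂ)^k * genChoose (s + k) k) /
        (((k:ℂ) + 1) * (Nat.choose n (k+1) : ℂ)) =
      ∑ k ∈ Finset.range n,
        ((-1:ℂ)^k * genChoose (s + k) k / (Nat.choose n k : ℂ) -
         (-1:ℂ)^(k+1) * genChoose (s + (k+1:ℕ)) (k+1) / (Nat.choose n (k+1) : ℂ)) := by
    apply Finset.sum_congr rfl
    intro k hk
    have hkn : k < n := Finset.mem_range.mp hk
    have e : (s + ((k+1:ℕ):ℂ)) = (s + k) + 1 := by push_cast; ring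
    rw [e, genChoose_succ]
    have ha := choose_ne n k hkn.le
    have hb := choose_ne n (k+1) hkn
    have hk1 : ((k:ℂ)+1) ≠ 0 := Nat.cast_add_one_ne_zero k
    have hr : ((Nat.choose n (k+1) : ℂ)) * ((k:ℂ)+1) =
        (Nat.choose n k : ℂ) * ((n:ℂ) - k) := by
      have := Nat.choose_succ_right_eq n k
      calc ((Nat.choose n (k+1) : ℂ)) * ((k:ℂ)+1)
          = (((Nat.choose n (k+1)) * (k+1) : ℕ) : ℂ) := by push_cast; ring
        _ = (((Nat.choose n k) * (n - k) : ℕ) : ℂ) := by rw [this]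
        _ = (Nat.choose n k : ℂ) * ((n:ℂ) - k) := by push_cast [Nat.cast_sub hkn.le]; ring
    field_simp
    linear_combination (-((-1:ℂ)^k * genChoose (s + ↑k) k)) * hr
  rw [key, Finset.sum_range_sub' (fun k => (-1:ℂ)^k * genChoose (s + k) k / (Nat.choose n k : ℂ))]
  simp [genChoose]


lemma fracKey (s g G A B D kc nc : ℂ) (p : ℂ)
    (hk1 : kc + 1 ≠ 0) (hB : B ≠ 0) (hD : D ≠ 0) (hn1 : nc + 1 ≠ 0)
    (h1 : D * (kc+1) = (nc+1) * A)
    (h2 : B * (kc+1) = A * (nc - kc))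
    (hs : (s+1) * G = (s + kc + 1) * g) :
    s * (p * g / ((kc+1)^2 * D)) - (s+1) * (p * G / ((kc+1)^2 * B)) =
      -(1/(nc+1)) * ((s + nc + 1) * (p * g) / ((kc + 1) * B)) := by
  have h3 : B * (nc+1) = D * (nc - kc) := by
    apply mul_left_cancel₀ hk1
    linear_combination (nc+1) * h2 - (nc - kc) * h1
  have key : s * (p * g) * B * (nc+1) - (s+1) * (p * G) * D * (nc+1) =
      -((s + nc + 1) * (p * g) * (kc+1) * D) := by
    linear_combination (-(p * D * (nc+1))) * hs + (s * p * g) * h3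
  set M : ℂ := (kc+1)^2 * D * B * (nc+1) with hMdef
  have hM : M ≠ 0 := by
    apply mul_ne_zero; apply mul_ne_zero; apply mul_ne_zero
    · exact pow_ne_zero 2 hk1
    · exact hD
    · exact hB
    · exact hn1
  have hM1 : (kc+1)^2 * D ≠ 0 := mul_ne_zero (pow_ne_zero 2 hk1) hD
  have hM2 : (kc+1)^2 * B ≠ 0 := mul_ne_zero (pow_ne_zero 2 hk1) hB
  have hM3 : (nc+1) * ((kc+1) * B) ≠ 0 := mul_ne_zero hn1 (mul_ne_zero hk1 hB)
  have a1 : s * (p * g / ((kc+1)^2 * D)) = (s * (p * g) * B * (nc+1)) / M := by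
    rw [mul_div_assoc', div_eq_div_iff hM1 hM]; ring
  have a2 : (s+1) * (p * G / ((kc+1)^2 * B)) = ((s+1) * (p * G) * D * (nc+1)) / M := by
    rw [mul_div_assoc', div_eq_div_iff hM2 hM]; ring
  have a3 : -(1/(nc+1)) * ((s + nc + 1) * (p * g) / ((kc + 1) * B)) =
      (-((s + nc + 1) * (p * g) * (kc+1) * D)) / M := by
    rw [neg_mul, div_mul_div_comm, one_mul, ← neg_div, div_eq_div_iff hM3 hM]
    ring
  rw [a1, a2, a3, div_sub_div_same]
  exact congrArg (· / M) key

lemma stepI (n : ℕ) (s : ℂ) :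
    1/((n:ℂ)+1) + s * ∑ k ∈ Finset.range (n+1),
        (-1:ℂ)^k * genChoose (s + k) k / (((k:ℂ)+1)^2 * (Nat.choose (n+1) (k+1) : ℂ)) =
      (s+1) * ∑ k ∈ Finset.range n,
        (-1:ℂ)^k * genChoose ((s+1) + k) k / (((k:ℂ)+1)^2 * (Nat.choose n (k+1) : ℂ)) +
      (-1:ℂ)^n * genChoose (s + ((n+1:ℕ):ℂ)) (n+1) / ((n:ℂ)+1) := by
  have hn1 : ((n:ℂ)+1) ≠ 0 := Nat.cast_add_one_ne_zero n
  rw [Finset.sum_range_succ, mul_add, Finset.mul_sum, Finset.mul_sum]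
  have per : ∀ k ∈ Finset.range n,
      s * ((-1:ℂ)^k * genChoose (s + k) k / (((k:ℂ)+1)^2 * (Nat.choose (n+1) (k+1) : ℂ))) -
      (s+1) * ((-1:ℂ)^k * genChoose ((s+1) + k) k / (((k:ℂ)+1)^2 * (Nat.choose n (k+1) : ℂ))) =
      -(1/((n:ℂ)+1)) * ((s + n + 1) * ((-1:ℂ)^k * genChoose (s + k) k) /
        (((k:ℂ) + 1) * (Nat.choose n (k+1) : ℂ))) := by
    intro k hk
    have hkn : k < n := Finset.mem_range.mp hk
    have e : ((s+1) + (k:ℂ)) = (s + k) + 1 := by ring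
    rw [e]
    have hs := genChoose_shift (s + k) k
    have hsc : s + (k:ℂ) + 1 - k = s + 1 := by ring
    rw [hsc] at hs
    have hk1 : ((k:ℂ)+1) ≠ 0 := Nat.cast_add_one_ne_zero k
    have hB := choose_ne n (k+1) hkn
    have hD := choose_ne (n+1) (k+1) (by omega)
    have h1 : ((Nat.choose (n+1) (k+1) : ℂ)) * ((k:ℂ)+1) = ((n:ℂ)+1) * (Nat.choose n k : ℂ) := by
      have := Nat.add_one_mul_choose_eq n k
      calc ((Nat.choose (n+1) (k+1) : ℂ)) * ((k:ℂ)+1)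
          = (((Nat.choose (n+1) (k+1)) * (k+1) : ℕ) : ℂ) := by push_cast; ring
        _ = ((Nat.succ n * Nat.choose n k : ℕ) : ℂ) := by rw [← this]
        _ = ((n:ℂ)+1) * (Nat.choose n k : ℂ) := by push_cast; ring
    have h2 : ((Nat.choose n (k+1) : ℂ)) * ((k:ℂ)+1) =
        (Nat.choose n k : ℂ) * ((n:ℂ) - k) := by
      have := Nat.choose_succ_right_eq n k
      calc ((Nat.choose n (k+1) : ℂ)) * ((k:ℂ)+1)
          = (((Nat.choose n (k+1)) * (k+1) : ℕ) : ℂ) := by push_cast; ring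
        _ = (((Nat.choose n k) * (n - k) : ℕ) : ℂ) := by rw [this]
        _ = (Nat.choose n k : ℂ) * ((n:ℂ) - k) := by push_cast [Nat.cast_sub hkn.le]; ring
    have hs' : (s + 1) * genChoose (s + (k:ℂ) + 1) k = (s + (k:ℂ) + 1) * genChoose (s + k) k := by
      linear_combination hs
    exact fracKey s (genChoose (s + k) k) (genChoose ((s + (k:ℂ)) + 1) k)
      (Nat.choose n k : ℂ) (Nat.choose n (k+1) : ℂ) (Nat.choose (n+1) (k+1) : ℂ)
      (k : ℂ) (n : ℂ) ((-1:ℂ)^k) hk1 hB hD hn1 h1 h2 hs'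
  have hsum : (∑ k ∈ Finset.range n,
        s * ((-1:ℂ)^k * genChoose (s + k) k / (((k:ℂ)+1)^2 * (Nat.choose (n+1) (k+1) : ℂ)))) -
      (∑ k ∈ Finset.range n,
        (s+1) * ((-1:ℂ)^k * genChoose ((s+1) + k) k / (((k:ℂ)+1)^2 * (Nat.choose n (k+1) : ℂ)))) =
      -(1/((n:ℂ)+1)) * (1 - (-1:ℂ)^n * genChoose (s + n) n) := by
    rw [← Finset.sum_sub_distrib, Finset.sum_congr rfl per, ← Finset.mul_sum, lemC]
  have e2 : (s + ((n+1:ℕ):ℂ)) = (s + n) + 1 := by push_cast; ring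
  rw [e2, genChoose_succ]
  have hgn : ((Nat.choose (n+1) (n+1) : ℂ)) = 1 := by
    rw [Nat.choose_self]; norm_num
  rw [hgn]
  have iN : ((n:ℂ)+1) * ((n:ℂ)+1)⁻¹ = 1 := mul_inv_cancel₀ hn1
  have iN2 : ((n:ℂ)+1)^2 * (((n:ℂ)+1)^2)⁻¹ = 1 := mul_inv_cancel₀ (pow_ne_zero 2 hn1)
  linear_combination hsum + (-((-1:ℂ)^n * genChoose (s + n) n * ((n:ℂ)+1)⁻¹)) * iN
    + (-(s * (-1:ℂ)^n * genChoose (s + n) n * (((n:ℂ)+1)^2)⁻¹ * (1 + ((n:ℂ)+1)*((n:ℂ)+1)⁻¹))) * iN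
    + (s * (-1:ℂ)^n * genChoose (s + n) n * (((n:ℂ)+1)⁻¹)^2) * iN2

theorem stmt_5 (n : ℕ) (hn : 0 < n) (s : ℂ) :
    ∑ k ∈ Finset.Icc 1 n, genChoose (s + n) k * (-1 : ℂ) ^ (k - 1) / k =
      Hc n + s * ∑ k ∈ Finset.range n,
        (-1 : ℂ) ^ k * genChoose (s + k) k /
          (((k : ℂ) + 1) ^ 2 * (Nat.choose n (k + 1) : ℂ)) := by
  induction n generalizing s with
  | zero => exact absurd hn (lt_irrefl 0)
  | succ n ih =>
    rcases Nat.eq_zero_or_pos n with h0 | hpos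
    · subst h0
      simp [Hc, genChoose, Finset.sum_range_succ]
      ring
    · have hIcc : ∑ k ∈ Finset.Icc 1 (n+1), genChoose (s + (n+1:ℕ)) k * (-1 : ℂ) ^ (k - 1) / k =
          (∑ k ∈ Finset.Icc 1 n, genChoose ((s+1) + n) k * (-1 : ℂ) ^ (k - 1) / k) +
          genChoose (s + ((n+1:ℕ):ℂ)) (n+1) * (-1:ℂ)^n / ((n:ℂ)+1) := by
        rw [Finset.sum_Icc_succ_top (by omega : 1 ≤ n+1)]
        have e : (s + ((n+1:ℕ):ℂ)) = (s+1) + n := by push_cast; ring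
        rw [e]
        norm_num
      rw [hIcc, ih hpos (s+1)]
      have hHc : Hc (n+1) = Hc n + 1/((n:ℂ)+1) := by
        rw [Hc, Hc, Finset.sum_range_succ]
      rw [hHc]
      linear_combination (-1 : ℂ) * stepI n s
end

section
/- Let n be a positive integer and let s be a complex number such that s + j ≠ 0 for j = 1, …, n. Then ∑_{k=1}^{n} C(s+n, k) · ((-1)^{k-1}/k^2) · (∑_{j=0}^{k-1} 1/(s+n-j)) = ∑_{k=0}^{n-1} ( (-1)^k/(k+1) ) · C(s+k, k) · (H_n − H_k) / ((n−k) · binom(n, k)) + s · ∑_{k=0}^{n-1} ( (-1)^k/(k+1) ) · C(s+k, k) · ( (H_n − H_k) / ((n−k) · binom(n, k)) ) · ∑_{j=1}^{k} 1/(s+j), where binom(n, k) is the ordinary binomial coefficient. -/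
open Polynomial Finset

noncomputable def Bp (k : ℕ) : ℂ[X] := ∏ j ∈ Finset.range k, (X + C ((j : ℂ) + 1))

noncomputable def Ap (n k : ℕ) : ℂ[X] := ∏ i ∈ Finset.range k, (X + C ((n : ℂ) - i))

noncomputable def gam (n k : ℕ) : ℂ :=
  (-1) ^ k / ((k : ℂ) + 1) * ((Hc n - Hc k) / (((n : ℂ) - k) * (n.choose k : ℂ)))
    / (k.factorial : ℂ)

noncomputable def del (k : ℕ) : ℂ := (-1) ^ (k - 1) / (((k : ℂ)) ^ 2 * (k.factorial : ℂ))

noncomputable def pP (n : ℕ) : ℂ[X] := ∑ k ∈ Finset.Icc 1 n, C (del k) * Ap n k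

noncomputable def qP (n : ℕ) : ℂ[X] := ∑ k ∈ Finset.range n, C (gam n k) * (X * Bp k)

lemma Hc_succ (n : ℕ) : Hc (n + 1) = Hc n + 1 / ((n : ℂ) + 1) := by
  simp [Hc, Finset.sum_range_succ]

set_option maxHeartbeats 1000000 in
lemma gam_rec (n k : ℕ) (h : k < n) :
    gam (n + 1) k - gam n k = ((k : ℂ) + 2) * gam (n + 1) (k + 1) := by
  have hk_le : k ≤ n := h.le
  have hD : (n.choose k : ℂ) ≠ 0 := by
    exact_mod_cast (Nat.choose_pos hk_le).ne'
  have hNK : ((n : ℂ) - k) ≠ 0 := by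
    have h1 : ((n - k : ℕ) : ℂ) ≠ 0 := by exact_mod_cast (Nat.sub_pos_of_lt h).ne'
    rwa [Nat.cast_sub hk_le] at h1
  have hN1K : ((n : ℂ) + 1 - k) ≠ 0 := by
    have h1 : ((n + 1 - k : ℕ) : ℂ) ≠ 0 := by
      have : 0 < n + 1 - k := by omega
      exact_mod_cast this.ne'
    rwa [Nat.cast_sub (by omega), Nat.cast_add, Nat.cast_one] at h1
  have hK1 : ((k : ℂ) + 1) ≠ 0 := Nat.cast_add_one_ne_zero k
  have hK2 : ((k : ℂ) + 2) ≠ 0 := by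
    have h2 : ((k + 2 : ℕ) : ℂ) ≠ 0 := by exact_mod_cast (Nat.succ_ne_zero (k + 1))
    intro hcon
    apply h2
    push_cast
    linear_combination hcon
  have hN1 : ((n : ℂ) + 1) ≠ 0 := Nat.cast_add_one_ne_zero n
  have hF : ((k.factorial : ℕ) : ℂ) ≠ 0 := by
    exact_mod_cast (Nat.factorial_pos k).ne'
  have hB1 : (((n + 1).choose k : ℕ) : ℂ) ≠ 0 := by
    exact_mod_cast (Nat.choose_pos (show k ≤ n + 1 by omega)).ne'
  have hB2 : (((n + 1).choose (k + 1) : ℕ) : ℂ) ≠ 0 := by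
    exact_mod_cast (Nat.choose_pos (show k + 1 ≤ n + 1 by omega)).ne'
  have hc1 : (((n + 1).choose k : ℕ) : ℂ) * ((n : ℂ) + 1 - k)
      = ((n : ℂ) + 1) * (n.choose k) := by
    have h0 := Nat.choose_mul_succ_eq n k
    have hcast : ((n.choose k * (n + 1) : ℕ) : ℂ)
        = (((n + 1).choose k * (n + 1 - k) : ℕ) : ℂ) := by
      exact_mod_cast congrArg (Nat.cast : ℕ → ℂ) h0
    push_cast [Nat.cast_sub (show k ≤ n + 1 by omega)] at hcast
    linear_combination -hcast
  have hc2 : (((n + 1).choose (k + 1) : ℕ) : ℂ) * ((k : ℂ) + 1)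
      = ((n : ℂ) + 1) * (n.choose k) := by
    have h0 := Nat.add_one_mul_choose_eq n k
    have hcast : (((n + 1) * n.choose k : ℕ) : ℂ)
        = (((n + 1).choose (k + 1) * (k + 1) : ℕ) : ℂ) := by
      exact_mod_cast congrArg (Nat.cast : ℕ → ℂ) h0
    push_cast at hcast
    linear_combination -hcast
  set x := (n : ℂ) with hx
  set y := (k : ℂ) with hy
  set a := Hc n with ha
  set b := Hc k with hb
  set D := ((n.choose k : ℕ) : ℂ) with hDdef
  set F := ((k.factorial : ℕ) : ℂ) with hFdef
  set B1 := (((n + 1).choose k : ℕ) : ℂ) with hB1def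
  set B2 := (((n + 1).choose (k + 1) : ℕ) : ℂ) with hB2def
  set e := ((-1 : ℂ)) ^ k with he
  have hd1 : (y + 1) * (x + 1 - y) * B1 * (x + 1) * F
      = (y + 1) * (x + 1) ^ 2 * D * F := by
    linear_combination ((y + 1) * (x + 1) * F) * hc1
  have hd3 : (y + 2) * (x - y) * B2 * ((y + 1) * ((y + 1) * (x + 1) * F))
      = (y + 2) * (x - y) * (x + 1) ^ 2 * (y + 1) * D * F := by
    linear_combination ((y + 2) * (x - y) * (y + 1) * (x + 1) * F) * hc2
  have g2 : gam n k = e * (a - b) / ((y + 1) * (x - y) * D * F) := by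
    unfold gam
    rw [← hx, ← hy, ← ha, ← hb, ← hDdef, ← hFdef, ← he]
    field_simp
  have g1 : gam (n + 1) k = e * ((a - b) * (x + 1) + 1) / ((y + 1) * (x + 1) ^ 2 * D * F) := by
    rw [← hd1]
    unfold gam
    rw [Hc_succ n]
    simp only [Nat.cast_add, Nat.cast_one]
    rw [← hx, ← hy, ← ha, ← hb, ← hB1def, ← hFdef, ← he]
    field_simp
    ring
  have g3 : gam (n + 1) (k + 1)
      = -e * ((a - b) * (x + 1) * (y + 1) + (y + 1) - (x + 1))
        / ((y + 2) * (x - y) * (x + 1) ^ 2 * (y + 1) * D * F) := by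
    rw [← hd3]
    unfold gam
    rw [Hc_succ n, Hc_succ k]
    simp only [Nat.cast_add, Nat.cast_one, Nat.cast_mul, Nat.factorial_succ]
    rw [← hx, ← hy, ← ha, ← hb, ← hB2def, ← hFdef]
    have hY2 : y + 1 + 1 ≠ 0 := by
      intro hcon; apply hK2; linear_combination hcon
    have hXY : x + 1 - (y + 1) ≠ 0 := by
      intro hcon; apply hNK; linear_combination hcon
    field_simp
    ring
  rw [g1, g2, g3]
  have hA : ((y + 1) * (x + 1) ^ 2 * D * F) ≠ 0 :=
    mul_ne_zero (mul_ne_zero (mul_ne_zero hK1 (pow_ne_zero 2 hN1)) hD) hF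
  have hB : ((y + 1) * (x - y) * D * F) ≠ 0 :=
    mul_ne_zero (mul_ne_zero (mul_ne_zero hK1 hNK) hD) hF
  have hC : ((y + 2) * (x - y) * (x + 1) ^ 2 * (y + 1) * D * F) ≠ 0 :=
    mul_ne_zero (mul_ne_zero (mul_ne_zero (mul_ne_zero (mul_ne_zero hK2 hNK)
      (pow_ne_zero 2 hN1)) hK1) hD) hF
  rw [div_sub_div _ _ hA hB, mul_div_assoc', div_eq_div_iff (mul_ne_zero hA hB) hC]
  ring


lemma gam_top (n : ℕ) : gam (n + 1) n = del (n + 1) := by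
  unfold gam del
  rw [Hc_succ n]
  simp only [Nat.add_sub_cancel, Nat.choose_succ_self_right, Nat.factorial_succ,
    Nat.cast_add, Nat.cast_one, Nat.cast_mul]
  have h1 : ((n : ℂ) + 1) - n = 1 := by ring
  rw [h1]
  have hN1 : ((n : ℂ) + 1) ≠ 0 := Nat.cast_add_one_ne_zero n
  have hF : ((n.factorial : ℕ) : ℂ) ≠ 0 := by
    exact_mod_cast (Nat.factorial_pos n).ne'
  field_simp
  ring

lemma Bp_succ (k : ℕ) : Bp (k + 1) = Bp k * (X + C ((k : ℂ) + 1)) :=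
  Finset.prod_range_succ _ _

lemma Bp_zero : Bp 0 = 1 := rfl

lemma Bp_comp_succ (k : ℕ) : Bp (k + 1) = (X + C 1) * (Bp k).comp (X + C 1) := by
  unfold Bp
  rw [Finset.prod_range_succ', Polynomial.prod_comp, mul_comm]
  congr 1
  · simp
  · refine Finset.prod_congr rfl fun i _ => ?_
    rw [Polynomial.add_comp, Polynomial.X_comp, Polynomial.C_comp]
    push_cast
    rw [show ((i : ℂ) + 1 + 1) = 1 + ((i : ℂ) + 1) by ring, C_add]
    ring

lemma Ap_comp (n k : ℕ) : (Ap n k).comp (X + C 1) = Ap (n + 1) k := by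
  unfold Ap
  rw [Polynomial.prod_comp]
  refine Finset.prod_congr rfl fun i _ => ?_
  rw [Polynomial.add_comp, Polynomial.X_comp, Polynomial.C_comp]
  push_cast
  rw [show ((n : ℂ) + 1 - i) = 1 + ((n : ℂ) - i) by ring, C_add]
  ring

lemma Ap_top (n : ℕ) : Ap (n + 1) (n + 1) = Bp (n + 1) := by
  unfold Ap Bp
  rw [← Finset.prod_range_reflect fun j => X + C ((j : ℂ) + 1)]
  refine Finset.prod_congr rfl fun i hi => ?_
  rw [Finset.mem_range] at hi
  congr 1
  have h1 : n + 1 - 1 - i = n - i := by omega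
  rw [h1]
  push_cast [Nat.cast_sub (show i ≤ n by omega)]
  ring

lemma pP_rec (n : ℕ) : pP (n + 1) = (pP n).comp (X + C 1) + C (del (n + 1)) * Bp (n + 1) := by
  unfold pP
  rw [Finset.sum_Icc_succ_top (by omega : 1 ≤ n + 1), Ap_top]
  congr 1
  rw [show ((∑ k ∈ Finset.Icc 1 n, C (del k) * Ap n k).comp (X + C 1))
      = ∑ k ∈ Finset.Icc 1 n, (C (del k) * Ap n k).comp (X + C 1) from
    map_sum (Polynomial.compRingHom (X + C 1)) _ _]
  refine Finset.sum_congr rfl fun k _ => ?_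
  rw [Polynomial.mul_comp, Polynomial.C_comp, Ap_comp]

lemma qP_comp (n : ℕ) :
    (qP n).comp (X + C 1) = ∑ k ∈ Finset.range n, C (gam n k) * Bp (k + 1) := by
  unfold qP
  have hms : (∑ k ∈ Finset.range n, C (gam n k) * (X * Bp k)).comp (X + C 1)
      = ∑ k ∈ Finset.range n, (C (gam n k) * (X * Bp k)).comp (X + C 1) := by
    simpa using map_sum (Polynomial.compRingHom (X + C 1))
      (fun k => C (gam n k) * (X * Bp k)) (Finset.range n)
  rw [hms]
  refine Finset.sum_congr rfl fun k _ => ?_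
  rw [Polynomial.mul_comp, Polynomial.C_comp, Polynomial.mul_comp, Polynomial.X_comp,
    ← Bp_comp_succ]

lemma qP_split (n : ℕ) :
    qP n = (∑ k ∈ Finset.range n, C (gam n k) * Bp (k + 1))
      - ∑ k ∈ Finset.range n, C (((k : ℂ) + 1) * gam n k) * Bp k := by
  unfold qP
  rw [← Finset.sum_sub_distrib]
  refine Finset.sum_congr rfl fun k _ => ?_
  rw [Bp_succ, C_mul]
  ring

lemma qP_rec (n : ℕ) : qP (n + 1)
    = (qP n).comp (X + C 1) + C (del (n + 1)) * Bp (n + 1) - C (gam (n + 1) 0) := by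
  rw [qP_split (n + 1), Finset.sum_range_succ, Finset.sum_range_succ', qP_comp, gam_top]
  have hsum : ∑ k ∈ Finset.range n, C (gam (n + 1) k) * Bp (k + 1)
      - ∑ k ∈ Finset.range n, C ((((k + 1 : ℕ) : ℂ) + 1) * gam (n + 1) (k + 1)) * Bp (k + 1)
      = ∑ k ∈ Finset.range n, C (gam n k) * Bp (k + 1) := by
    rw [← Finset.sum_sub_distrib]
    refine Finset.sum_congr rfl fun k hk => ?_
    rw [← sub_mul, ← C_sub]
    congr 2
    have hrec := gam_rec n k (Finset.mem_range.mp hk)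
    push_cast
    linear_combination hrec
  have hzero : C ((((0 : ℕ) : ℂ) + 1) * gam (n + 1) 0) * Bp 0 = C (gam (n + 1) 0) := by
    rw [Bp_zero]
    norm_num
  rw [hzero]
  linear_combination hsum

lemma pq_const (n : ℕ) : ∃ c : ℂ, pP n = qP n + C c := by
  induction n with
  | zero =>
    refine ⟨0, ?_⟩
    have h1 : Finset.Icc 1 0 = (∅ : Finset ℕ) := rfl
    simp [pP, qP, h1]
  | succ n ih =>
    obtain ⟨c, hc⟩ := ih
    refine ⟨c + gam (n + 1) 0, ?_⟩
    rw [pP_rec, qP_rec, hc, Polynomial.add_comp, Polynomial.C_comp, C_add]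
    ring

lemma deriv_pq (n : ℕ) : derivative (pP n) = derivative (qP n) := by
  obtain ⟨c, hc⟩ := pq_const n
  rw [hc, derivative_add, derivative_C, add_zero]

lemma eval_deriv_prod (m : ℕ) (f : ℕ → ℂ) (s : ℂ) (hf : ∀ i < m, s + f i ≠ 0) :
    Polynomial.eval s (derivative (∏ i ∈ Finset.range m, (X + C (f i)))) =
      (∏ i ∈ Finset.range m, (s + f i)) * ∑ i ∈ Finset.range m, 1 / (s + f i) := by
  induction m with
  | zero => simp
  | succ m ih =>
    have hm : s + f m ≠ 0 := hf m (Nat.lt_succ_self m)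
    rw [Finset.prod_range_succ, derivative_mul, Polynomial.eval_add, Polynomial.eval_mul,
      Polynomial.eval_mul, ih (fun i hi => hf i (by omega)),
      Finset.prod_range_succ, Finset.sum_range_succ]
    simp only [derivative_add, derivative_X, derivative_C, add_zero, Polynomial.eval_one,
      Polynomial.eval_add, Polynomial.eval_X, Polynomial.eval_C, mul_one]
    rw [Polynomial.eval_prod]
    simp only [Polynomial.eval_add, Polynomial.eval_X, Polynomial.eval_C]
    have h2 : (∏ i ∈ Finset.range m, (s + f i)) * (s + f m) * (1 / (s + f m))
        = ∏ i ∈ Finset.range m, (s + f i) := by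
      rw [mul_one_div, mul_div_assoc, div_self hm, mul_one]
    linear_combination -h2

lemma eval_Bp (k : ℕ) (s : ℂ) :
    Polynomial.eval s (Bp k) = ∏ j ∈ Finset.range k, (s + ((j : ℂ) + 1)) := by
  unfold Bp
  rw [Polynomial.eval_prod]
  simp

lemma sum_Icc_one (k : ℕ) (f : ℕ → ℂ) :
    ∑ j ∈ Finset.Icc 1 k, f j = ∑ j ∈ Finset.range k, f (j + 1) := by
  induction k with
  | zero => rfl
  | succ k ih => rw [Finset.sum_range_succ, ← ih, Finset.sum_Icc_succ_top (by omega : 1 ≤ k + 1)]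

theorem stmt_9 (n : ℕ) (hn : 0 < n) (s : ℂ)
    (hs : ∀ j ∈ Finset.Icc 1 n, s + (j : ℂ) ≠ 0) :
    ∑ k ∈ Finset.Icc 1 n, genChoose (s + n) k * ((-1 : ℂ) ^ (k - 1) / (k : ℂ) ^ 2) *
        (∑ j ∈ Finset.range k, 1 / (s + n - j)) =
      (∑ k ∈ Finset.range n, (-1 : ℂ) ^ k / ((k : ℂ) + 1) * genChoose (s + k) k *
          (Hc n - Hc k) / (((n : ℂ) - k) * (Nat.choose n k : ℂ))) +
        s * ∑ k ∈ Finset.range n, (-1 : ℂ) ^ k / ((k : ℂ) + 1) * genChoose (s + k) k *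
          ((Hc n - Hc k) / (((n : ℂ) - k) * (Nat.choose n k : ℂ))) *
          ∑ j ∈ Finset.Icc 1 k, 1 / (s + j) := by
  have hL : ∑ k ∈ Finset.Icc 1 n, genChoose (s + n) k * ((-1 : ℂ) ^ (k - 1) / (k : ℂ) ^ 2) *
        (∑ j ∈ Finset.range k, 1 / (s + n - j))
      = Polynomial.eval s (derivative (pP n)) := by
    unfold pP
    rw [derivative_sum, Polynomial.eval_finset_sum]
    refine Finset.sum_congr rfl fun k hk => ?_
    obtain ⟨hk1, hk2⟩ := Finset.mem_Icc.mp hk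
    rw [Polynomial.derivative_C_mul, Polynomial.eval_mul, Polynomial.eval_C]
    have hf : ∀ i < k, s + ((n : ℂ) - i) ≠ 0 := by
      intro i hi
      have hin : i < n := lt_of_lt_of_le hi hk2
      have he : s + ((n : ℂ) - i) = s + ((n - i : ℕ) : ℂ) := by
        push_cast [Nat.cast_sub hin.le]
        ring
      rw [he]
      exact hs (n - i) (Finset.mem_Icc.mpr ⟨by omega, by omega⟩)
    rw [show Ap n k = ∏ i ∈ Finset.range k, (X + C ((n : ℂ) - i)) from rfl,
      eval_deriv_prod k _ s hf]
    unfold genChoose del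
    have hP : ∏ i ∈ Finset.range k, (s + (n : ℂ) - i)
        = ∏ i ∈ Finset.range k, (s + ((n : ℂ) - i)) :=
      Finset.prod_congr rfl fun i _ => by ring
    have hS : ∑ j ∈ Finset.range k, 1 / (s + (n : ℂ) - j)
        = ∑ j ∈ Finset.range k, 1 / (s + ((n : ℂ) - j)) :=
      Finset.sum_congr rfl fun j _ => by rw [add_sub_assoc]
    rw [hP, hS]
    ring
  have hR : (∑ k ∈ Finset.range n, (-1 : ℂ) ^ k / ((k : ℂ) + 1) * genChoose (s + k) k *
          (Hc n - Hc k) / (((n : ℂ) - k) * (Nat.choose n k : ℂ))) +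
        s * ∑ k ∈ Finset.range n, (-1 : ℂ) ^ k / ((k : ℂ) + 1) * genChoose (s + k) k *
          ((Hc n - Hc k) / (((n : ℂ) - k) * (Nat.choose n k : ℂ))) *
          ∑ j ∈ Finset.Icc 1 k, 1 / (s + j)
      = Polynomial.eval s (derivative (qP n)) := by
    unfold qP
    rw [derivative_sum, Polynomial.eval_finset_sum, Finset.mul_sum, ← Finset.sum_add_distrib]
    refine Finset.sum_congr rfl fun k hk => ?_
    have hkn : k < n := Finset.mem_range.mp hk
    rw [Polynomial.derivative_C_mul, Polynomial.eval_mul, Polynomial.eval_C, derivative_mul,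
      derivative_X, one_mul, Polynomial.eval_add, Polynomial.eval_mul, Polynomial.eval_X]
    have hf : ∀ j < k, s + ((j : ℂ) + 1) ≠ 0 := by
      intro j hj
      have he : s + ((j : ℂ) + 1) = s + ((j + 1 : ℕ) : ℂ) := by push_cast; ring
      rw [he]
      exact hs (j + 1) (Finset.mem_Icc.mpr ⟨by omega, by omega⟩)
    have hdB : Polynomial.eval s (derivative (Bp k))
        = (∏ j ∈ Finset.range k, (s + ((j : ℂ) + 1)))
          * ∑ j ∈ Finset.range k, 1 / (s + ((j : ℂ) + 1)) := by
      unfold Bp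
      exact eval_deriv_prod k _ s hf
    rw [hdB, eval_Bp]
    have hgen : genChoose (s + (k : ℂ)) k
        = (∏ j ∈ Finset.range k, (s + ((j : ℂ) + 1))) / (k.factorial : ℂ) := by
      unfold genChoose
      congr 1
      rw [← Finset.prod_range_reflect (fun j => s + ((j : ℂ) + 1)) k]
      refine Finset.prod_congr rfl fun i hi => ?_
      have hik : i < k := Finset.mem_range.mp hi
      have he : ((k - 1 - i : ℕ) : ℂ) = (k : ℂ) - 1 - i := by
        push_cast [Nat.cast_sub (show 1 ≤ k by omega), Nat.cast_sub (show i ≤ k - 1 by omega)]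
        ring
      rw [he]
      ring
    have hsig : ∑ j ∈ Finset.Icc 1 k, 1 / (s + (j : ℂ))
        = ∑ j ∈ Finset.range k, 1 / (s + ((j : ℂ) + 1)) := by
      rw [sum_Icc_one]
      refine Finset.sum_congr rfl fun j _ => ?_
      push_cast
      ring
    rw [hgen, hsig]
    unfold gam
    ring
  rw [hL, hR, deriv_pq n]
end

section
/- For every positive integer n: ∑_{k=1}^{n} (binom(2k, k) / 4^k) · (2·H_{2k} − H_k) = ((2n+1) / 4^n) · binom(2n, n) · (2·H_{2n} − H_n − 4n/(2n+1)), as an identity of rational numbers. -/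
/-- The `n`-th harmonic number as a rational number. -/
def Hq (n : ℕ) : ℚ := ∑ i ∈ Finset.range n, 1 / (i + 1)

/-- The `n`-th generalized harmonic number of order 2 as a rational number. -/
def H2q (n : ℕ) : ℚ := ∑ i ∈ Finset.range n, 1 / ((i : ℚ) + 1) ^ 2

lemma Hq_succ (n : ℕ) : Hq (n + 1) = Hq n + 1 / ((n : ℚ) + 1) := by
  simp [Hq, Finset.sum_range_succ]

theorem stmt_12 (n : ℕ) (hn : 0 < n) :
    ∑ k ∈ Finset.Icc 1 n, (Nat.choose (2 * k) k : ℚ) / 4 ^ k * (2 * Hq (2 * k) - Hq k) =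
      (2 * (n : ℚ) + 1) / 4 ^ n * (Nat.choose (2 * n) n : ℚ) *
        (2 * Hq (2 * n) - Hq n - 4 * (n : ℚ) / (2 * (n : ℚ) + 1)) := by
  induction n with
  | zero => exact absurd hn (by norm_num)
  | succ m ih =>
    rcases Nat.eq_zero_or_pos m with hm | hm
    · subst hm
      norm_num [Hq, Finset.sum_range_succ]
    · rw [Finset.sum_Icc_succ_top (by omega), ih hm]
      have hcb : ((m : ℚ) + 1) * (Nat.choose (2 * (m + 1)) (m + 1) : ℚ)
          = 2 * (2 * (m : ℚ) + 1) * (Nat.choose (2 * m) m : ℚ) := by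
        have := Nat.succ_mul_centralBinom_succ m
        rw [Nat.centralBinom, Nat.centralBinom] at this
        exact_mod_cast this
      have h2m : 2 * (m + 1) = (2 * m + 1) + 1 := by ring
      have hH2 : Hq (2 * (m + 1)) =
          Hq (2 * m) + 1 / (2 * (m : ℚ) + 1) + 1 / (2 * (m : ℚ) + 2) := by
        rw [h2m, Hq_succ, Hq_succ]; push_cast; ring
      have hH1 : Hq (m + 1) = Hq m + 1 / ((m : ℚ) + 1) := Hq_succ m
      have hC : (Nat.choose (2 * (m + 1)) (m + 1) : ℚ)
          = 2 * (2 * (m : ℚ) + 1) * (Nat.choose (2 * m) m : ℚ) / ((m : ℚ) + 1) := by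
        field_simp at hcb ⊢
        linarith [hcb]
      have hm1 : ((m : ℚ) + 1) ≠ 0 := by positivity
      have hm2 : (2 * (m : ℚ) + 1) ≠ 0 := by positivity
      have hm3 : (2 * (m : ℚ) + 2) ≠ 0 := by positivity
      have h4 : ((4 : ℚ) ^ m) ≠ 0 := by positivity
      rw [hH2, hH1, hC]
      push_cast
      field_simp
      ring
end
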